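/- Let n ≥ 1 and 1 < q < 2. For all x, y ∈ ℝⁿ, |y|^q ≥ |x|^q + q|x|^{q−2} x·(y−x) + (q(q−1)/2) |y−x|² (1 + |x| + |y|)^{q−2}, where |x|^{q−2}x is interpreted as 0 when x = 0. -/

import Mathlib

open RealInnerProductSpace

open Set in
private lemma key_scalar (q : ℝ) (hq1 : 1 < q) (hq2 : q < 2) {a b M : ℝ} (ha : 0 < a)
    (hb : 0 ≤ b) (haM : a ≤ M) (hbM : b ≤ M) :
    a ^ q + q * a ^ (q - 1) * (b - a) + q * (q - 1) / 2 * M ^ (q - 2) * (b - a) ^ 2 ≤ b ^ q := by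
  have hM : 0 < M := lt_of_lt_of_le ha haM
  set c : ℝ := q * (q - 1) / 2 * M ^ (q - 2) with hc_def
  have hMq : (0:ℝ) ≤ M ^ (q - 2) := Real.rpow_nonneg hM.le _
  have hc : 0 ≤ c := mul_nonneg (by nlinarith) hMq
  set h : ℝ → ℝ := fun t => t ^ q - c * t ^ 2 with hh
  have h1 : ∀ t : ℝ, t ≠ 0 → HasDerivAt h (q * t ^ (q - 1) - 2 * c * t) t := by
    intro t ht
    have d1 : HasDerivAt (fun s : ℝ => s ^ q) (q * t ^ (q - 1)) t :=
      Real.hasDerivAt_rpow_const (Or.inl ht)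
    have d2 : HasDerivAt (fun s : ℝ => c * s ^ 2) (c * (2 * t)) t := by
      simpa using (hasDerivAt_pow 2 t).const_mul c
    have := d1.sub d2
    rw [show q * t ^ (q - 1) - 2 * c * t = q * t ^ (q - 1) - c * (2 * t) by ring]
    exact this
  have h2 : ∀ t : ℝ, t ≠ 0 →
      HasDerivAt (fun s : ℝ => q * s ^ (q - 1) - 2 * c * s)
        (q * ((q - 1) * t ^ (q - 2)) - 2 * c) t := by
    intro t ht
    have d1 : HasDerivAt (fun s : ℝ => s ^ (q - 1)) ((q - 1) * t ^ (q - 1 - 1)) t :=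
      Real.hasDerivAt_rpow_const (Or.inl ht)
    have d2 : HasDerivAt (fun s : ℝ => 2 * c * s) (2 * c) t := by
      simpa using (hasDerivAt_id t).const_mul (2 * c)
    have := (d1.const_mul q).sub d2
    have he : q - 1 - 1 = q - 2 := by ring
    rw [he] at this
    exact this
  have hcont : ContinuousOn h (Icc 0 M) := by
    intro t _
    have c1 : ContinuousAt (fun s : ℝ => s ^ q) t :=
      Real.continuousAt_rpow_const t q (Or.inr (by linarith))
    exact (c1.sub ((continuous_pow 2).continuousAt.const_mul c)).continuousWithinAt
  have hconv : ConvexOn ℝ (Icc 0 M) h := by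
    apply convexOn_of_hasDerivWithinAt2_nonneg (convex_Icc 0 M) hcont
      (f' := fun t => q * t ^ (q - 1) - 2 * c * t)
      (f'' := fun t => q * ((q - 1) * t ^ (q - 2)) - 2 * c)
    · rw [interior_Icc]
      intro t ht
      exact (h1 t (ne_of_gt ht.1)).hasDerivWithinAt
    · rw [interior_Icc]
      intro t ht
      exact (h2 t (ne_of_gt ht.1)).hasDerivWithinAt
    · rw [interior_Icc]
      intro t ht
      have hMt : M ^ (q - 2) ≤ t ^ (q - 2) :=
        Real.rpow_le_rpow_of_nonpos ht.1 ht.2.le (by linarith)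
      have : 0 ≤ t ^ (q - 2) := Real.rpow_nonneg ht.1.le _
      rw [hc_def]
      nlinarith [mul_le_mul_of_nonneg_left hMt (show (0:ℝ) ≤ q * (q - 1) by nlinarith)]
  have hda : HasDerivAt h (q * a ^ (q - 1) - 2 * c * a) a := h1 a ha.ne'
  have hamem : a ∈ Icc 0 M := ⟨ha.le, haM⟩
  have hbmem : b ∈ Icc 0 M := ⟨hb, hbM⟩
  rcases lt_trichotomy a b with hab | hab | hab
  · have hs := hconv.le_slope_of_hasDerivAt hamem hbmem hab hda
    rw [slope_def_field] at hs
    rw [le_div_iff₀ (by linarith)] at hs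
    simp only [hh] at hs
    nlinarith [hs]
  · subst hab
    simp
  · have hs := hconv.slope_le_of_hasDerivAt hbmem hamem hab hda
    rw [slope_def_field] at hs
    rw [div_le_iff₀ (by linarith)] at hs
    simp only [hh] at hs
    nlinarith [hs]

/-- **Sharpened convexity of the `q`-power function, `1 < q < 2`** (Proposition 3.2,
case `1 < q < 2`, with explicit constant `c(q) = q(q-1)/2`): for all `x, y ∈ ℝⁿ`,
`|y|^q ≥ |x|^q + q|x|^{q-2} x·(y-x) + (q(q-1)/2)|y-x|²(1+|x|+|y|)^{q-2}`. -/
theorem sharpened_convexity_q_lt_two (q : ℝ) (hq1 : 1 < q) (hq2 : q < 2)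
    (n : ℕ) (hn : 1 ≤ n) (x y : EuclideanSpace ℝ (Fin n)) :
    ‖y‖ ^ q ≥ ‖x‖ ^ q + q * ‖x‖ ^ (q - 2) * ⟪x, y - x⟫ +
      q * (q - 1) / 2 * ‖y - x‖ ^ 2 * (1 + ‖x‖ + ‖y‖) ^ (q - 2) := by
  have hb : (0:ℝ) ≤ ‖y‖ := norm_nonneg y
  rcases eq_or_lt_of_le (norm_nonneg x) with hx0 | ha
  · -- x = 0 case
    have hx : x = 0 := by rwa [eq_comm, norm_eq_zero] at hx0
    subst hx
    simp only [norm_zero, sub_zero, Real.zero_rpow (show q - 2 ≠ 0 by intro h; linarith),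
      Real.zero_rpow (show q ≠ 0 by positivity), mul_zero, zero_mul, add_zero, zero_add,
      inner_zero_left]
    rw [ge_iff_le]
    rcases eq_or_lt_of_le hb with hb0 | hbp
    · rw [← hb0]
      simp [Real.zero_rpow (show q ≠ 0 by positivity)]
    · have h1 : (1 + ‖y‖ : ℝ) ^ (q - 2) ≤ ‖y‖ ^ (q - 2) :=
        Real.rpow_le_rpow_of_nonpos hbp (by linarith) (by linarith)
      have h2 : ‖y‖ ^ (2:ℕ) * ‖y‖ ^ (q - 2) = ‖y‖ ^ q := by
        rw [← Real.rpow_natCast ‖y‖ 2, ← Real.rpow_add hbp]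
        norm_num
      have h3 : (0:ℝ) ≤ (1 + ‖y‖ : ℝ) ^ (q - 2) := Real.rpow_nonneg (by linarith) _
      have h5 : q * (q - 1) / 2 ≤ 1 := by nlinarith
      calc q * (q - 1) / 2 * ‖y‖ ^ 2 * (1 + ‖y‖) ^ (q - 2)
          ≤ 1 * (‖y‖ ^ 2 * ‖y‖ ^ (q - 2)) := by
            rw [mul_assoc]
            apply mul_le_mul h5 (by gcongr) (by positivity) one_pos.le
        _ = ‖y‖ ^ q := by rw [one_mul, h2]
  · -- x ≠ 0 case
    set a : ℝ := ‖x‖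
    set b : ℝ := ‖y‖
    set M : ℝ := 1 + a + b with hM_def
    have key := key_scalar q hq1 hq2 ha hb (show a ≤ M by rw [hM_def]; linarith)
      (show b ≤ M by rw [hM_def]; linarith)
    set p : ℝ := ⟪x, y⟫ with hp_def
    have hip : ⟪x, y - x⟫ = p - a ^ 2 := by
      rw [inner_sub_right, hp_def, real_inner_self_eq_norm_sq]
    have hns : ‖y - x‖ ^ 2 = b ^ 2 - 2 * p + a ^ 2 := by
      rw [norm_sub_sq_real, real_inner_comm]
    have hpa : p ≤ a * b := real_inner_le_norm x y
    have hMq : M ^ (q - 2) ≤ a ^ (q - 2) :=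
      Real.rpow_le_rpow_of_nonpos ha (by rw [hM_def]; linarith) (by linarith)
    have hMq0 : (0:ℝ) ≤ M ^ (q - 2) := Real.rpow_nonneg (by rw [hM_def]; positivity) _
    have haq0 : (0:ℝ) ≤ a ^ (q - 2) := Real.rpow_nonneg ha.le _
    have haq : a ^ (q - 2) * a = a ^ (q - 1) := by
      rw [← Real.rpow_add_one ha.ne' (q - 2)]
      congr 1
      ring
    have h2c : q * (q - 1) * M ^ (q - 2) ≤ q * a ^ (q - 2) := by
      nlinarith [mul_le_mul_of_nonneg_left hMq (show (0:ℝ) ≤ q by linarith),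
        mul_nonneg (show (0:ℝ) ≤ (2 - q) * q by nlinarith) hMq0]
    have hint : 0 ≤ (q * a ^ (q - 2) - q * (q - 1) * M ^ (q - 2)) * (a * b - p) :=
      mul_nonneg (by linarith) (by linarith)
    rw [ge_iff_le, hip, hns]
    rw [← haq] at key
    nlinarith [key, hint]
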